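/- For a, b ∈ (0,1], the map f = f_{a,b} has no 2-periodic point x with both x > 1/2 and f(x) > 1/2; i.e., if x ∈ (1/2,1], f(x) ∈ (1/2,1] and f(f(x)) = x, then f(x) = x. -/
import Mathlib


noncomputable def fab (a b x : ℝ) : ℝ :=
  if x ≤ 1/2 then x * (1 + a - a * x) else x * (1 - b + b * x)

theorem stmt16 (a b : ℝ) (ha : a ∈ Set.Ioc (0:ℝ) 1) (hb : b ∈ Set.Ioc (0:ℝ) 1)
    (x : ℝ) (hx : x ∈ Set.Ioc (1/2 : ℝ) 1) (hfx : fab a b x ∈ Set.Ioc (1/2 : ℝ) 1)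
    (hper : fab a b (fab a b x) = x) :
    fab a b x = x := by
  obtain ⟨hb0, hb1⟩ := hb
  obtain ⟨hx1, hx2⟩ := hx
  simp only [fab, if_neg (not_le.mpr hx1)] at hfx hper ⊢
  obtain ⟨hy1, hy2⟩ := hfx
  rw [if_neg (not_le.mpr hy1)] at hper
  have key : b * (x^2 - x + (x*(1-b+b*x))^2 - x*(1-b+b*x)) = 0 := by
    linear_combination hper
  have key2 : x^2 - x + (x*(1-b+b*x))^2 - x*(1-b+b*x) = 0 := by
    rcases mul_eq_zero.mp key with h | h
    · linarith
    · exact h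
  have hx' : x = 1 := by nlinarith [mul_nonneg (le_of_lt (lt_trans (by norm_num) hy1)) (sub_nonneg.mpr hy2), mul_nonneg (le_of_lt (lt_trans (by norm_num : (0:ℝ) < 1/2) hx1)) (sub_nonneg.mpr hx2)]
  have hy' : x*(1-b+b*x) = 1 := by nlinarith
  rw [hy', hx']
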